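/- Let w : (0,∞) → (0,∞) be increasing and locally absolutely continuous on (c,∞) for some c > 0, and suppose y ↦ w(y)/log y is nondecreasing on a neighborhood of infinity and tends to ∞. If for every ε ∈ (0,1) there exists y_ε > c with w′(y) ≤ e^{ε w(y)} a.e. on (y_ε,∞), then for every ε ∈ (0,1) there exists ỹ_ε > c with w′(y) ≥ e^{-ε w(y)} a.e. on (ỹ_ε,∞). -/

import Mathlib

open Filter MeasureTheory
open Set Topology

-- Aux 1: integrability of g on Ioc a b
lemma g_integrableOn {w : ℝ → ℝ} (hwmono : StrictMonoOn w (Set.Ioi 0))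
    (hwpos : ∀ y > 0, 0 < w y) {a b : ℝ} (ha : 3 ≤ a) (hab : a ≤ b) :
    IntegrableOn (fun y => w y / (y * Real.log y)) (Set.Ioc a b) := by
  have hsub : Set.Ioc a b ⊆ Set.Ioi 0 := fun y hy => lt_trans (by linarith) hy.1
  have hm : AEMeasurable w (volume.restrict (Set.Ioc a b)) :=
    aemeasurable_restrict_of_monotoneOn measurableSet_Ioc
      ((hwmono.monotoneOn).mono hsub)
  have hmden : Measurable fun y : ℝ => (y * Real.log y) :=
    measurable_id.mul Real.measurable_log
  have hg : AEMeasurable (fun y => w y / (y * Real.log y))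
      (volume.restrict (Set.Ioc a b)) := hm.div hmden.aemeasurable
  have hla : 0 < Real.log a := Real.log_pos (by linarith)
  refine Integrable.mono' (g := fun _ => w b / (a * Real.log a))
    (integrableOn_const (hs := measure_Ioc_lt_top.ne)) hg.aestronglyMeasurable ?_
  rw [ae_restrict_iff' measurableSet_Ioc]
  refine Filter.Eventually.of_forall fun y hy => ?_
  have hy0 : 0 < y := lt_trans (by linarith) hy.1
  have hly : Real.log a ≤ Real.log y := Real.log_le_log (by linarith) hy.1.le
  have hwyb : w y ≤ w b := (hwmono.monotoneOn) (hsub hy) (by simp; linarith [hy.2, hy.1] : b ∈ Set.Ioi (0:ℝ)) hy.2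
  have hwy : 0 < w y := hwpos y hy0
  have hden : 0 < a * Real.log a := by positivity
  have hdeny : a * Real.log a ≤ y * Real.log y := by
    apply mul_le_mul hy.1.le hly hla.le (by linarith)
  rw [Real.norm_eq_abs, abs_of_pos (div_pos hwy (mul_pos hy0 (lt_of_lt_of_le hla hly)))]
  exact div_le_div₀ (le_trans hwy.le hwyb) hwyb hden hdeny

-- Aux 2: key interval inequality
lemma key_interval {w w' : ℝ → ℝ} {c : ℝ}
    (hwpos : ∀ y > 0, 0 < w y) (hwmono : StrictMonoOn w (Set.Ioi 0))
    (hac : ∀ a b : ℝ, c < a → a ≤ b →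
      IntegrableOn w' (Set.Ioc a b) ∧ w b - w a = ∫ y in Set.Ioc a b, w' y)
    {y₀ a b : ℝ}
    (hmonoR : MonotoneOn (fun y => w y / Real.log y) (Set.Ioi y₀))
    (ha3 : 3 ≤ a) (hay : y₀ < a) (hca : c < a) (hab : a ≤ b) :
    ∫ y in Set.Ioc a b, w y / (y * Real.log y) ≤ ∫ y in Set.Ioc a b, w' y := by
  have hla : 0 < Real.log a := Real.log_pos (by linarith)
  have hlb : 0 < Real.log b := Real.log_pos (by linarith)
  have hb0 : 0 < b := by linarith
  have ha0 : 0 < a := by linarith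
  set rb := w b / Real.log b with hrb
  have hrbpos : 0 < rb := div_pos (hwpos b hb0) hlb
  -- step 1 : ∫ g ≤ ∫ rb * y⁻¹
  have hint_inv : IntegrableOn (fun y => rb * y⁻¹) (Set.Ioc a b) := by
    have hcont : ContinuousOn (fun y : ℝ => y⁻¹) (Set.Icc a b) :=
      ContinuousOn.inv₀ continuousOn_id fun x hx => ne_of_gt (by linarith [hx.1])
    exact ((hcont.integrableOn_Icc).mono_set Set.Ioc_subset_Icc_self).const_mul rb
  have h1 : ∫ y in Set.Ioc a b, w y / (y * Real.log y) ≤ ∫ y in Set.Ioc a b, rb * y⁻¹ := by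
    apply setIntegral_mono_on (g_integrableOn hwmono hwpos ha3 hab) hint_inv measurableSet_Ioc
    intro y hy
    have hy0 : 0 < y := by linarith [hy.1]
    have hly : 0 < Real.log y := Real.log_pos (by linarith [hy.1])
    have hry : w y / Real.log y ≤ rb := by
      rcases eq_or_lt_of_le hy.2 with h | h
      · subst h; rfl
      · exact hmonoR (show y ∈ Set.Ioi y₀ by simp; linarith [hy.1])
          (show b ∈ Set.Ioi y₀ by simp; linarith [hy.1, hy.2]) hy.2
    have : w y / (y * Real.log y) = (w y / Real.log y) * y⁻¹ := by
      rw [mul_comm y, ← div_div, div_eq_mul_inv (w y / Real.log y)]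
    rw [this]
    exact mul_le_mul_of_nonneg_right hry (inv_nonneg.mpr hy0.le)
  -- step 2 : ∫ rb * y⁻¹ = rb * (log b - log a)
  have h2 : ∫ y in Set.Ioc a b, rb * y⁻¹ = rb * (Real.log b - Real.log a) := by
    rw [MeasureTheory.integral_const_mul]
    rw [← intervalIntegral.integral_of_le hab, integral_inv_of_pos ha0 hb0,
      Real.log_div (ne_of_gt hb0) (ne_of_gt ha0)]
  -- step 3 : rb * (log b - log a) ≤ w b - w a
  have h3 : rb * (Real.log b - Real.log a) ≤ w b - w a := by
    have hra : w a / Real.log a ≤ rb := by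
      rcases eq_or_lt_of_le hab with h | h
      · subst h; rfl
      · exact hmonoR (by simp; linarith) (by simp; linarith) hab
    have := (div_le_div_iff₀ hla hlb).mp hra
    have hwb : rb * Real.log b = w b := div_mul_cancel₀ _ (ne_of_gt hlb)
    nlinarith [hla, hlb]
  rw [← (hac a b hca hab).2]
  calc ∫ y in Set.Ioc a b, w y / (y * Real.log y)
      ≤ ∫ y in Set.Ioc a b, rb * y⁻¹ := h1
    _ = rb * (Real.log b - Real.log a) := h2
    _ ≤ w b - w a := h3

theorem deriv_lower_bound_of_upper_bound (w w' : ℝ → ℝ) (c : ℝ) (hc : 0 < c)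
    (hwpos : ∀ y > 0, 0 < w y) (hwmono : StrictMonoOn w (Set.Ioi 0))
    (hac : ∀ a b : ℝ, c < a → a ≤ b →
      IntegrableOn w' (Set.Ioc a b) ∧ w b - w a = ∫ y in Set.Ioc a b, w' y)
    (hratio_mono : ∃ y₀ > 1, MonotoneOn (fun y => w y / Real.log y) (Set.Ioi y₀))
    (hratio_top : Tendsto (fun y => w y / Real.log y) atTop atTop)
    (hupper : ∀ ε ∈ Set.Ioo (0 : ℝ) 1, ∃ yε > c,
      ∀ᵐ y : ℝ, y > yε → w' y ≤ Real.exp (ε * w y)) :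
    ∀ ε ∈ Set.Ioo (0 : ℝ) 1, ∃ yε > c,
      ∀ᵐ y : ℝ, y > yε → Real.exp (-ε * w y) ≤ w' y := by
  obtain ⟨y₀, hy₀1, hmonoR⟩ := hratio_mono
  rintro ε ⟨hε0, hε1⟩
  obtain ⟨Y, hY⟩ := Filter.eventually_atTop.mp (hratio_top.eventually_ge_atTop (4 / ε))
  set A : ℝ := max (max c y₀) (max Y 3) + 1 with hA
  have hAc : c < A := by
    have := le_max_left c y₀; have := le_max_left (max c y₀) (max Y 3); linarith
  have hAy₀ : y₀ < A := by
    have := le_max_right c y₀; have := le_max_left (max c y₀) (max Y 3); linarith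
  have hAY : Y < A := by
    have := le_max_left Y 3; have := le_max_right (max c y₀) (max Y 3); linarith
  have hA4 : 4 ≤ A := by
    have := le_max_right Y 3; have := le_max_right (max c y₀) (max Y 3); linarith
  refine ⟨A, hAc, ?_⟩
  set g : ℝ → ℝ := fun y => w y / (y * Real.log y) with hg
  set F : ℝ → ℝ := Set.indicator (Set.Ioi A) (fun y => w' y - g y) with hF
  -- local integrability of F
  have hFloc : LocallyIntegrable F volume := by
    rw [locallyIntegrable_iff]
    intro K hK
    obtain ⟨r, hr⟩ := hK.isBounded.subset_closedBall 0
    set b : ℝ := max r A with hb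
    have hIoc : IntegrableOn (fun y => w' y - g y) (Set.Ioc A b) := by
      exact ((hac A b hAc (le_max_right r A)).1).sub
        (g_integrableOn hwmono hwpos (by linarith) (le_max_right r A))
    have h1 : IntegrableOn F (Set.Ioc A b) :=
      hIoc.congr_fun (fun y hy => by
        rw [hF]; exact (Set.indicator_of_mem (Set.mem_Ioi.mpr hy.1) (fun y => w' y - g y)).symm) measurableSet_Ioc
    have h2 : IntegrableOn F (Set.Iic A) := by
      have : IntegrableOn (fun _ : ℝ => (0:ℝ)) (Set.Iic A) volume := integrable_zero _ _ _
      exact this.congr_fun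
        (fun y hy => by
          rw [hF]; exact (Set.indicator_of_notMem (by simpa using hy) (fun y => w' y - g y)).symm) measurableSet_Iic
    refine ((h2.union h1).mono_set ?_)
    intro y hyK
    rcases le_or_gt y A with h | h
    · exact Or.inl h
    · refine Or.inr ⟨h, ?_⟩
      have := hr hyK
      rw [Real.closedBall_eq_Icc] at this
      exact le_trans this.2 (by rw [zero_add, hb]; exact le_max_left r A)
  -- Lebesgue differentiation
  have hae := IsUnifLocDoublingMeasure.ae_tendsto_average (μ := (volume : Measure ℝ)) hFloc 1
  filter_upwards [hae] with x hx hxA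
  have hx0 : (0:ℝ) < x := by linarith
  have hlxpos : 0 < Real.log x := Real.log_pos (by linarith)
  have hxtend : Tendsto (fun r : ℝ => ⨍ y in Metric.closedBall x r, F y) (𝓝[>] 0) (𝓝 (F x)) := by
    refine hx (fun _ => x) id tendsto_id ?_
    filter_upwards [self_mem_nhdsWithin] with r hr
    simp only [Metric.mem_closedBall, dist_self, id]
    have : (0:ℝ) < r := hr
    linarith
  have hFx : 0 ≤ F x := by
    refine ge_of_tendsto hxtend ?_
    filter_upwards [Ioo_mem_nhdsGT_of_mem (Set.mem_Ico.mpr ⟨le_refl 0, sub_pos.mpr hxA⟩)]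
      with r hr
    have hr0 : 0 < r := hr.1
    have har : A < x - r := by linarith [hr.2]
    rw [setAverage_eq]
    refine smul_nonneg (by positivity) ?_
    rw [Real.closedBall_eq_Icc, integral_Icc_eq_integral_Ioc]
    have hEq : Set.EqOn F (fun y => w' y - g y) (Set.Ioc (x - r) (x + r)) := fun y hy => by
      rw [hF]; exact Set.indicator_of_mem (Set.mem_Ioi.mpr (lt_trans har hy.1)) (fun y => w' y - g y)
    rw [setIntegral_congr_fun measurableSet_Ioc hEq]
    have hab : x - r ≤ x + r := by linarith
    have hw'int := (hac (x - r) (x + r) (by linarith) hab).1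
    have hgint := g_integrableOn hwmono hwpos (a := x - r) (b := x + r) (by linarith) hab
    rw [integral_sub hw'int hgint]
    have := key_interval hwpos hwmono hac hmonoR (a := x - r) (b := x + r)
      (by linarith) (by linarith) (by linarith) hab
    linarith
  have hFxeq : F x = w' x - g x := by
    rw [hF]; exact Set.indicator_of_mem (Set.mem_Ioi.mpr hxA) (fun y => w' y - g y)
  -- arithmetic: exp (-ε * w x) ≤ g x
  have hratio : 4 / ε ≤ w x / Real.log x := hY x (by linarith)
  have hw4 : 4 / ε * Real.log x ≤ w x := (le_div_iff₀ hlxpos).mp hratio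
  have hwx1 : 1 ≤ w x := by
    have h4 : (4:ℝ) ≤ 4 / ε := by
      rw [le_div_iff₀ hε0]; nlinarith
    have hlx1 : 1 ≤ Real.log x := by
      rw [Real.le_log_iff_exp_le hx0]
      linarith [Real.exp_one_lt_d9]
    nlinarith
  have hxlog : x * Real.log x ≤ Real.exp (ε * w x) := by
    have hlxx : Real.log x ≤ x := by
      linarith [Real.log_le_sub_one_of_pos hx0]
    have h1 : x * Real.log x ≤ x * x :=
      mul_le_mul_of_nonneg_left hlxx hx0.le
    have h2 : x * x = Real.exp (2 * Real.log x) := by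
      rw [two_mul, Real.exp_add, Real.exp_log hx0]
    have h3 : 2 * Real.log x ≤ ε * w x := by
      have : ε * (4 / ε * Real.log x) ≤ ε * w x :=
        mul_le_mul_of_nonneg_left hw4 hε0.le
      have he : ε * (4 / ε * Real.log x) = 4 * Real.log x := by
        field_simp
      nlinarith
    calc x * Real.log x ≤ x * x := h1
      _ = Real.exp (2 * Real.log x) := h2
      _ ≤ Real.exp (ε * w x) := Real.exp_le_exp.mpr h3
  have hgx : Real.exp (-ε * w x) ≤ g x := by
    have hden : 0 < x * Real.log x := by positivity
    have h1 : Real.exp (-ε * w x) = (Real.exp (ε * w x))⁻¹ := by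
      rw [neg_mul, Real.exp_neg]
    have h2 : (Real.exp (ε * w x))⁻¹ ≤ (x * Real.log x)⁻¹ :=
      inv_anti₀ hden hxlog
    have h3 : (x * Real.log x)⁻¹ ≤ g x := by
      rw [hg]
      calc (x * Real.log x)⁻¹ = 1 / (x * Real.log x) := (one_div _).symm
        _ ≤ w x / (x * Real.log x) := by
            apply div_le_div_of_nonneg_right hwx1 hden.le
      -- note: div_le_div_of_nonneg_right might have different arg order
    linarith
  linarith [hFx, hFxeq ▸ hFx]
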